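/- Let x* ∈ D and y* := (α − p_A·x*)/p_B. If μ_A + σ̃_A·Φ⁻¹(1 − x*) = μ_B + σ̃_B·Φ⁻¹(1 − y*) (a common threshold on posterior expected quality), then Q(x) < Q(x*) for every x ∈ D with x ≠ x*; that is, the Bayesian-optimal selection rate is the unique maximizer of the selection utility Q on D. Moreover, x* equals x^opt, the Bayesian-optimal selection rate of group A. -/

import Mathlib

noncomputable def gpdf (t : ℝ) : ℝ := Real.exp (-t ^ 2 / 2) / Real.sqrt (2 * Real.pi)

noncomputable def gcdf (x : ℝ) : ℝ := ∫ t in Set.Iic x, gpdf t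

noncomputable def gquant : ℝ → ℝ := Function.invFun gcdf

open MeasureTheory Set Filter Topology

lemma gpdf_pos (t : ℝ) : 0 < gpdf t :=
  div_pos (Real.exp_pos _) (Real.sqrt_pos.mpr (by positivity))

@[fun_prop] lemma gpdf_continuous : Continuous gpdf := by
  unfold gpdf; fun_prop

lemma gpdf_eq : gpdf = fun t => Real.exp (-(1/2) * t ^ 2) / Real.sqrt (2 * Real.pi) := by
  funext t; unfold gpdf; ring_nf

lemma gpdf_integrable : Integrable gpdf := by
  rw [gpdf_eq]
  exact (integrable_exp_neg_mul_sq (by norm_num : (0:ℝ) < 1/2)).div_const _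

lemma gpdf_total : (∫ t, gpdf t) = 1 := by
  rw [gpdf_eq]
  rw [MeasureTheory.integral_div, integral_gaussian]
  rw [show Real.pi / (1/2) = 2 * Real.pi by ring]
  rw [div_self (Real.sqrt_ne_zero'.mpr (by positivity))]

lemma gcdf_sub (a b : ℝ) : gcdf b - gcdf a = ∫ t in a..b, gpdf t :=
  intervalIntegral.integral_Iic_sub_Iic gpdf_integrable.integrableOn gpdf_integrable.integrableOn

lemma gcdf_strictMono : StrictMono gcdf := by
  intro a b hab
  have h : 0 < ∫ t in a..b, gpdf t :=
    intervalIntegral.intervalIntegral_pos_of_pos_on (gpdf_integrable.intervalIntegrable)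
      (fun x _ => gpdf_pos x) hab
  have := gcdf_sub a b
  linarith

lemma gcdf_nonneg (x : ℝ) : 0 ≤ gcdf x :=
  setIntegral_nonneg measurableSet_Iic fun t _ => (gpdf_pos t).le

lemma gcdf_le_one (x : ℝ) : gcdf x ≤ 1 := by
  rw [← gpdf_total]
  exact setIntegral_le_integral gpdf_integrable (ae_of_all _ fun t => (gpdf_pos t).le)

lemma gcdf_mem_Ioo (x : ℝ) : gcdf x ∈ Ioo (0:ℝ) 1 :=
  ⟨lt_of_le_of_lt (gcdf_nonneg (x-1)) (gcdf_strictMono (by linarith)),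
   lt_of_lt_of_le (gcdf_strictMono (show x < x+1 by linarith)) (gcdf_le_one (x+1))⟩

lemma gcdf_tendsto_atTop : Tendsto (fun n : ℕ => gcdf n) atTop (𝓝 1) := by
  have h := tendsto_setIntegral_of_monotone (f := gpdf) (μ := volume)
    (s := fun n : ℕ => Iic (n:ℝ)) (fun n => measurableSet_Iic)
    (fun m n hmn => Iic_subset_Iic.mpr (by exact_mod_cast hmn))
    gpdf_integrable.integrableOn
  have hu : (⋃ n : ℕ, Iic (n:ℝ)) = univ := by
    ext x; simp only [mem_iUnion, mem_Iic, mem_univ, iff_true]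
    exact exists_nat_ge x
  rw [hu] at h
  simpa [gpdf_total, gcdf] using h

lemma gcdf_tendsto_atBot : Tendsto (fun n : ℕ => gcdf (-n)) atTop (𝓝 0) := by
  have h := tendsto_setIntegral_of_monotone (f := gpdf) (μ := volume)
    (s := fun n : ℕ => Ioi (-(n:ℝ))) (fun n => measurableSet_Ioi)
    (fun m n hmn => Ioi_subset_Ioi (by exact_mod_cast neg_le_neg (Nat.cast_le.mpr hmn)))
    gpdf_integrable.integrableOn
  have hu : (⋃ n : ℕ, Ioi (-(n:ℝ))) = univ := by
    ext x; simp only [mem_iUnion, mem_Ioi, mem_univ, iff_true]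
    obtain ⟨n, hn⟩ := exists_nat_gt (-x)
    exact ⟨n, by linarith⟩
  rw [hu] at h
  have heq : ∀ n : ℕ, gcdf (-n) = 1 - ∫ t in Ioi (-(n:ℝ)), gpdf t := by
    intro n
    have := intervalIntegral.integral_Iic_add_Ioi (b := (-(n:ℝ)))
      gpdf_integrable.integrableOn gpdf_integrable.integrableOn
    rw [gpdf_total] at this
    simp only [gcdf]; linarith
  simp only [heq]
  have : Tendsto (fun n : ℕ => 1 - ∫ t in Ioi (-(n:ℝ)), gpdf t) atTop (𝓝 (1 - 1)) :=
    (tendsto_const_nhds.sub (by simpa [gpdf_total] using h))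
  simpa using this

lemma gcdf_surj {p : ℝ} (hp : p ∈ Ioo (0:ℝ) 1) : ∃ x, gcdf x = p := by
  obtain ⟨n, hn⟩ := ((gcdf_tendsto_atTop.eventually (eventually_gt_nhds hp.2)).exists)
  obtain ⟨m, hm⟩ := ((gcdf_tendsto_atBot.eventually (eventually_lt_nhds hp.1)).exists)
  have hcont : Continuous gcdf := by
    have h := intervalIntegral.continuous_primitive
      (fun a b => gpdf_integrable.intervalIntegrable) 0
    have heq : gcdf = fun b => gcdf 0 + ∫ t in (0:ℝ)..b, gpdf t := by
      funext b; have := gcdf_sub 0 b; linarith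
    rw [heq]; exact continuous_const.add h
  have hmn : (-(m:ℝ)) ≤ n := by
    by_contra hc
    exact absurd (gcdf_strictMono (lt_of_not_ge hc)) (by linarith)
  obtain ⟨c, _, hc⟩ := intermediate_value_Icc hmn hcont.continuousOn
    (mem_Icc.mpr ⟨hm.le, hn.le⟩)
  exact ⟨c, hc⟩

lemma gcdf_gquant {p : ℝ} (hp : p ∈ Ioo (0:ℝ) 1) : gcdf (gquant p) = p :=
  Function.invFun_eq (gcdf_surj hp)

lemma hasDerivAt_neg_gpdf (t : ℝ) : HasDerivAt (fun s => -gpdf s) (t * gpdf t) t := by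
  have h1 : HasDerivAt (fun s : ℝ => -s ^ 2 / 2) (-t) t := by
    have := ((hasDerivAt_pow 2 t).neg).div_const 2
    simpa using this.congr_deriv (by ring)
  have h2 : HasDerivAt (fun s : ℝ => Real.exp (-s ^ 2 / 2)) (Real.exp (-t^2/2) * (-t)) t :=
    (Real.hasDerivAt_exp _).comp t h1
  have h3 : HasDerivAt gpdf (Real.exp (-t^2/2) * (-t) / Real.sqrt (2 * Real.pi)) t :=
    h2.div_const _
  have := h3.neg
  refine this.congr_deriv ?_
  unfold gpdf; field_simp

lemma gpdf_sub (a b : ℝ) : gpdf a - gpdf b = ∫ t in a..b, t * gpdf t := by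
  have h := intervalIntegral.integral_eq_sub_of_hasDerivAt
    (f := fun s => -gpdf s) (f' := fun t => t * gpdf t) (a := a) (b := b)
    (fun t _ => hasDerivAt_neg_gpdf t)
    ((by fun_prop : Continuous fun t : ℝ => t * gpdf t).intervalIntegrable a b)
  rw [h]; ring

lemma key_neg {a b : ℝ} (hab : a ≠ b) : (∫ t in a..b, (t - b) * gpdf t) < 0 := by
  rcases lt_or_gt_of_ne hab with h | h
  · have hpos : 0 < ∫ t in a..b, (b - t) * gpdf t :=
      intervalIntegral.intervalIntegral_pos_of_pos_on
        ((by fun_prop : Continuous fun t : ℝ => (b - t) * gpdf t).intervalIntegrable a b)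
        (fun x hx => mul_pos (by linarith [hx.2]) (gpdf_pos x)) h
    have heq : (∫ t in a..b, (b - t) * gpdf t) = -∫ t in a..b, (t - b) * gpdf t := by
      rw [← intervalIntegral.integral_neg]; congr 1; funext t; ring
    linarith [heq ▸ hpos]
  · have hpos : 0 < ∫ t in b..a, (t - b) * gpdf t :=
      intervalIntegral.intervalIntegral_pos_of_pos_on
        ((by fun_prop : Continuous fun t : ℝ => (t - b) * gpdf t).intervalIntegrable b a)
        (fun x hx => mul_pos (by linarith [hx.1]) (gpdf_pos x)) h
    rw [intervalIntegral.integral_symm]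
    linarith

lemma key_lt {s μ u v : ℝ} (hs : 0 < s) (hu : u ∈ Ioo (0:ℝ) 1) (hv : v ∈ Ioo (0:ℝ) 1)
    (huv : u ≠ v) :
    μ * u + s * gpdf (gquant (1 - u)) - (μ * v + s * gpdf (gquant (1 - v)))
      < (μ + s * gquant (1 - v)) * (u - v) := by
  set a := gquant (1 - u) with ha_def
  set b := gquant (1 - v) with hb_def
  have ha : gcdf a = 1 - u := gcdf_gquant ⟨by linarith [hu.2], by linarith [hu.1]⟩
  have hb : gcdf b = 1 - v := gcdf_gquant ⟨by linarith [hv.2], by linarith [hv.1]⟩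
  have hab : a ≠ b := by
    intro h; apply huv; rw [h] at ha; rw [ha] at hb; linarith
  have h1 : u - v = ∫ t in a..b, gpdf t := by
    rw [← gcdf_sub, ha, hb]; ring
  have h2 : gpdf a - gpdf b = ∫ t in a..b, t * gpdf t := gpdf_sub a b
  have h3 : (∫ t in a..b, (t - b) * gpdf t) < 0 := key_neg hab
  have h4 : (∫ t in a..b, (t - b) * gpdf t)
      = (∫ t in a..b, t * gpdf t) - b * ∫ t in a..b, gpdf t := by
    have e1 : IntervalIntegrable (fun t => t * gpdf t) volume a b :=
      (by fun_prop : Continuous fun t : ℝ => t * gpdf t).intervalIntegrable a b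
    have e2 : IntervalIntegrable (fun t => b * gpdf t) volume a b :=
      (by fun_prop : Continuous fun t : ℝ => b * gpdf t).intervalIntegrable a b
    rw [← intervalIntegral.integral_const_mul, ← intervalIntegral.integral_sub e1 e2]
    congr 1; funext t; ring
  have h5 : gpdf a - gpdf b - b * (u - v) < 0 := by
    rw [h2, h1]; linarith
  nlinarith [mul_neg_of_pos_of_neg hs h5]

noncomputable def sHat (η σ : ℝ) : ℝ := Real.sqrt (η ^ 2 + σ ^ 2)

noncomputable def sTil (η σ : ℝ) : ℝ := η ^ 2 / sHat η σ

def Dset (pA α : ℝ) : Set ℝ :=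
  {x | x ∈ Set.Ioo (0:ℝ) 1 ∧ (α - pA * x) / (1 - pA) ∈ Set.Ioo (0:ℝ) 1}

noncomputable def Qfun (pA α μA μB sA sB x : ℝ) : ℝ :=
  (1 / α) * (pA * (μA * x + sA * gpdf (gquant (1 - x)))
    + (1 - pA) * (μB * ((α - pA * x) / (1 - pA))
      + sB * gpdf (gquant (1 - (α - pA * x) / (1 - pA)))))

noncomputable def clampTo (lo hi x : ℝ) : ℝ := min hi (max lo x)

lemma sTil_pos {η σ : ℝ} (hη : 0 < η) (hσ : 0 < σ) : 0 < sTil η σ := by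
  unfold sTil sHat; positivity

/-- a selection rate `x*` achieving a common posterior-quality
threshold is the unique maximizer of `Q` on `D`, and equals the
Bayesian-optimal selection rate of group `A`. -/
theorem stmt5 (pA α μA μB ηA ηB σA σB θt xstar : ℝ)
    (hpA : pA ∈ Set.Ioo (0:ℝ) 1) (hα : α ∈ Set.Ioo (0:ℝ) 1)
    (hηA : 0 < ηA) (hηB : 0 < ηB) (hσA : 0 < σA) (hσB : 0 < σB)
    (hxD : xstar ∈ Dset pA α)
    (hcommon : μA + sTil ηA σA * gquant (1 - xstar)
        = μB + sTil ηB σB * gquant (1 - (α - pA * xstar) / (1 - pA)))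
    (hθt : pA * (1 - gcdf ((θt - μA) / sTil ηA σA))
        + (1 - pA) * (1 - gcdf ((θt - μB) / sTil ηB σB)) = α) :
    (∀ x ∈ Dset pA α, x ≠ xstar →
        Qfun pA α μA μB (sTil ηA σA) (sTil ηB σB) x
          < Qfun pA α μA μB (sTil ηA σA) (sTil ηB σB) xstar)
    ∧ xstar = 1 - gcdf ((θt - μA) / sTil ηA σA) := by
  obtain ⟨hpA1, hpA2⟩ := hpA
  obtain ⟨hα1, hα2⟩ := hα
  have hpB : 0 < 1 - pA := by linarith
  set sA := sTil ηA σA with hsA_def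
  set sB := sTil ηB σB with hsB_def
  have hsA : 0 < sA := sTil_pos hηA hσA
  have hsB : 0 < sB := sTil_pos hηB hσB
  obtain ⟨hxs, hys⟩ := hxD
  set ys := (α - pA * xstar) / (1 - pA) with hys_def
  set θ := μA + sA * gquant (1 - xstar) with hθ_def
  constructor
  · intro x hx hne
    obtain ⟨hx1, hx2⟩ := hx
    set y := (α - pA * x) / (1 - pA) with hy_def
    have hyne : y ≠ ys := by
      intro h
      apply hne
      rw [hy_def, hys_def, div_eq_div_iff (by linarith) (by linarith)] at h
      have : pA * x = pA * xstar := by nlinarith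
      exact mul_left_cancel₀ (by linarith) this
    have h1 := key_lt (μ := μA) hsA hx1 hxs hne
    have h2 := key_lt (μ := μB) hsB hx2 hys hyne
    have hsum : pA * (x - xstar) + (1 - pA) * (y - ys) = 0 := by
      rw [hy_def, hys_def]
      field_simp
      ring
    have hc : μB + sB * gquant (1 - ys) = μA + sA * gquant (1 - xstar) :=
      hcommon.symm.trans hθ_def
    rw [hc] at h2
    have hzero : pA * ((μA + sA * gquant (1 - xstar)) * (x - xstar))
        + (1 - pA) * ((μA + sA * gquant (1 - xstar)) * (y - ys)) = 0 := by
      have h' : pA * ((μA + sA * gquant (1 - xstar)) * (x - xstar))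
          + (1 - pA) * ((μA + sA * gquant (1 - xstar)) * (y - ys))
          = (μA + sA * gquant (1 - xstar)) * (pA * (x - xstar) + (1 - pA) * (y - ys)) := by ring
      rw [h', hsum, mul_zero]
    have hA := mul_lt_mul_of_pos_left h1 hpA1
    have hB := mul_lt_mul_of_pos_left h2 hpB
    have hEE : pA * (μA * x + sA * gpdf (gquant (1 - x)))
          + (1 - pA) * (μB * y + sB * gpdf (gquant (1 - y)))
        < pA * (μA * xstar + sA * gpdf (gquant (1 - xstar)))
          + (1 - pA) * (μB * ys + sB * gpdf (gquant (1 - ys))) := by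
      linarith
    show (1 / α) * (pA * (μA * x + sA * gpdf (gquant (1 - x)))
          + (1 - pA) * (μB * y + sB * gpdf (gquant (1 - y))))
        < (1 / α) * (pA * (μA * xstar + sA * gpdf (gquant (1 - xstar)))
          + (1 - pA) * (μB * ys + sB * gpdf (gquant (1 - ys))))
    exact mul_lt_mul_of_pos_left hEE (by positivity)
  · have hq1 : gcdf (gquant (1 - xstar)) = 1 - xstar :=
      gcdf_gquant ⟨by linarith [hxs.2], by linarith [hxs.1]⟩
    have hq2 : gcdf (gquant (1 - ys)) = 1 - ys :=
      gcdf_gquant ⟨by linarith [hys.2], by linarith [hys.1]⟩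
    have e1 : (θ - μA) / sA = gquant (1 - xstar) := by
      rw [hθ_def]; field_simp; ring
    have e2 : (θ - μB) / sB = gquant (1 - ys) := by
      rw [hcommon]; field_simp; ring
    have hx' : 1 - gcdf ((θ - μA) / sA) = xstar := by rw [e1, hq1]; ring
    have hy' : 1 - gcdf ((θ - μB) / sB) = ys := by rw [e2, hq2]; ring
    have hθeq : pA * (1 - gcdf ((θ - μA) / sA))
        + (1 - pA) * (1 - gcdf ((θ - μB) / sB)) = α := by
      rw [hx', hy', hys_def]
      field_simp; ring
    have hθθ : θt = θ := by
      rcases lt_trichotomy θt θ with h | h | h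
      · exfalso
        have c1 : gcdf ((θt - μA) / sA) < gcdf ((θ - μA) / sA) :=
          gcdf_strictMono (by apply div_lt_div_of_pos_right _ hsA <;> linarith)
        have c2 : gcdf ((θt - μB) / sB) < gcdf ((θ - μB) / sB) :=
          gcdf_strictMono (by apply div_lt_div_of_pos_right _ hsB <;> linarith)
        nlinarith
      · exact h
      · exfalso
        have c1 : gcdf ((θ - μA) / sA) < gcdf ((θt - μA) / sA) :=
          gcdf_strictMono (by apply div_lt_div_of_pos_right _ hsA <;> linarith)
        have c2 : gcdf ((θ - μB) / sB) < gcdf ((θt - μB) / sB) :=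
          gcdf_strictMono (by apply div_lt_div_of_pos_right _ hsB <;> linarith)
        nlinarith
    rw [hθθ, hx']
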